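/- In the matrix dynamical system dA_{ij}/dt = (2s − m r_i − n c_j) A_{ij} (with s, r_i, c_j computed from the entrywise square of A), the quantity Δ = (1/m)∑_i (s − m r_i)² + (1/n)∑_j (s − n c_j)² satisfies dΔ/dt = −4 ∑_{i=1}^m ∑_{j=1}^n (2s − m r_i − n c_j)² A_{ij}². -/

import Mathlib

open Matrix BigOperators

/-- In the matrix dynamical system `dAᵢⱼ/dt = (2s - m rᵢ - n cⱼ) Aᵢⱼ` (with `s`, `rᵢ`, `cⱼ`
computed from the entrywise square of `A`), the quantity `Δ` satisfies
`dΔ/dt = -4 ∑ᵢⱼ (2s - m rᵢ - n cⱼ)² Aᵢⱼ²`. -/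
theorem matDelta_deriv {m n : ℕ} (hm : 0 < m) (hn : 0 < n)
    (A : ℝ → Matrix (Fin m) (Fin n) ℝ)
    (s : ℝ → ℝ) (r : ℝ → Fin m → ℝ) (c : ℝ → Fin n → ℝ) (Δ : ℝ → ℝ)
    (hr : ∀ t i, r t i = ∑ j, (A t i j) ^ 2)
    (hc : ∀ t j, c t j = ∑ i, (A t i j) ^ 2)
    (hs : ∀ t, s t = ∑ i, ∑ j, (A t i j) ^ 2)
    (hΔ : ∀ t, Δ t = (1 / (m : ℝ)) * ∑ i, (s t - (m : ℝ) * r t i) ^ 2 +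
                     (1 / (n : ℝ)) * ∑ j, (s t - (n : ℝ) * c t j) ^ 2)
    (hode : ∀ t i j, HasDerivAt (fun τ => A τ i j)
      ((2 * s t - (m : ℝ) * r t i - (n : ℝ) * c t j) * A t i j) t) :
    ∀ t, HasDerivAt Δ
      (-4 * ∑ i, ∑ j, (2 * s t - (m : ℝ) * r t i - (n : ℝ) * c t j) ^ 2 * (A t i j) ^ 2) t := by
  intro t
  have hm' : (m : ℝ) ≠ 0 := Nat.cast_ne_zero.mpr hm.ne'
  have hn' : (n : ℝ) ≠ 0 := Nat.cast_ne_zero.mpr hn.ne'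
  set D : Fin m → Fin n → ℝ :=
    fun i j => 2 * s t - (m : ℝ) * r t i - (n : ℝ) * c t j with hDdef
  set R' : Fin m → ℝ := fun i => ∑ j, 2 * D i j * (A t i j) ^ 2 with hR'
  set C' : Fin n → ℝ := fun j => ∑ i, 2 * D i j * (A t i j) ^ 2 with hC'
  set S' : ℝ := ∑ i, R' i with hS'
  -- derivatives of squared entries
  have hA2 : ∀ i j, HasDerivAt (fun τ => (A τ i j) ^ 2) (2 * D i j * (A t i j) ^ 2) t := by
    intro i j
    have h := (hode t i j).fun_pow 2
    refine h.congr_deriv ?_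
    simp [hDdef]
    ring
  have hR : ∀ i, HasDerivAt (fun τ => ∑ j, (A τ i j) ^ 2) (R' i) t :=
    fun i => HasDerivAt.fun_sum fun j _ => hA2 i j
  have hC : ∀ j, HasDerivAt (fun τ => ∑ i, (A τ i j) ^ 2) (C' j) t :=
    fun j => HasDerivAt.fun_sum fun i _ => hA2 i j
  have hS : HasDerivAt (fun τ => ∑ i, ∑ j, (A τ i j) ^ 2) S' t :=
    HasDerivAt.fun_sum fun i _ => hR i
  -- Δ as explicit function of A
  have hfun : Δ = fun τ =>
      (1 / (m : ℝ)) * ∑ i, ((∑ i', ∑ j', (A τ i' j') ^ 2) - (m : ℝ) * ∑ j, (A τ i j) ^ 2) ^ 2 +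
      (1 / (n : ℝ)) * ∑ j, ((∑ i', ∑ j', (A τ i' j') ^ 2) - (n : ℝ) * ∑ i, (A τ i j) ^ 2) ^ 2 := by
    funext τ
    rw [hΔ τ]
    congr 1
    · congr 1
      exact Finset.sum_congr rfl fun i _ => by rw [hs, hr]
    · congr 1
      exact Finset.sum_congr rfl fun j _ => by rw [hs, hc]
  rw [hfun]
  -- derivative of each row term
  have fI : ∀ i : Fin m, HasDerivAt
      (fun τ => ((∑ i', ∑ j', (A τ i' j') ^ 2) - (m : ℝ) * ∑ j, (A τ i j) ^ 2) ^ 2)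
      (2 * (s t - (m : ℝ) * r t i) * (S' - (m : ℝ) * R' i)) t := by
    intro i
    have h := (hS.fun_sub ((hR i).const_mul (m : ℝ))).fun_pow 2
    refine h.congr_deriv ?_
    rw [hs t, hr t i]
    ring
  have gJ : ∀ j : Fin n, HasDerivAt
      (fun τ => ((∑ i', ∑ j', (A τ i' j') ^ 2) - (n : ℝ) * ∑ i, (A τ i j) ^ 2) ^ 2)
      (2 * (s t - (n : ℝ) * c t j) * (S' - (n : ℝ) * C' j)) t := by
    intro j
    have h := (hS.fun_sub ((hC j).const_mul (n : ℝ))).fun_pow 2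
    refine h.congr_deriv ?_
    rw [hs t, hc t j]
    ring
  have hDeriv : HasDerivAt
      (fun τ =>
        (1 / (m : ℝ)) * ∑ i, ((∑ i', ∑ j', (A τ i' j') ^ 2) - (m : ℝ) * ∑ j, (A τ i j) ^ 2) ^ 2 +
        (1 / (n : ℝ)) * ∑ j, ((∑ i', ∑ j', (A τ i' j') ^ 2) - (n : ℝ) * ∑ i, (A τ i j) ^ 2) ^ 2)
      ((1 / (m : ℝ)) * ∑ i, 2 * (s t - (m : ℝ) * r t i) * (S' - (m : ℝ) * R' i) +
       (1 / (n : ℝ)) * ∑ j, 2 * (s t - (n : ℝ) * c t j) * (S' - (n : ℝ) * C' j)) t :=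
    ((HasDerivAt.fun_sum fun i _ => fI i).const_mul _).fun_add
      ((HasDerivAt.fun_sum fun j _ => gJ j).const_mul _)
  convert hDeriv using 1
  -- now pure algebra
  have hz1 : ∑ i, (s t - (m : ℝ) * r t i) = 0 := by
    have h1 : ∑ i, r t i = s t := by
      rw [hs t]; exact Finset.sum_congr rfl fun i _ => hr t i
    rw [Finset.sum_sub_distrib, Finset.sum_const, ← Finset.mul_sum, h1,
      Finset.card_univ, Fintype.card_fin, nsmul_eq_mul]
    ring
  have hz2 : ∑ j, (s t - (n : ℝ) * c t j) = 0 := by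
    have h1 : ∑ j, c t j = s t := by
      rw [hs t, Finset.sum_comm]
      exact Finset.sum_congr rfl fun j _ => hc t j
    rw [Finset.sum_sub_distrib, Finset.sum_const, ← Finset.mul_sum, h1,
      Finset.card_univ, Fintype.card_fin, nsmul_eq_mul]
    ring
  have e1 : ∑ i, 2 * (s t - (m : ℝ) * r t i) * (S' - (m : ℝ) * R' i) =
      (∑ i, (s t - (m : ℝ) * r t i)) * (2 * S') -
      (m : ℝ) * ∑ i, 2 * (s t - (m : ℝ) * r t i) * R' i := by
    calc ∑ i, 2 * (s t - (m : ℝ) * r t i) * (S' - (m : ℝ) * R' i)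
        = ∑ i, ((s t - (m : ℝ) * r t i) * (2 * S') -
            (m : ℝ) * (2 * (s t - (m : ℝ) * r t i) * R' i)) :=
          Finset.sum_congr rfl fun i _ => by ring
      _ = _ := by rw [Finset.sum_sub_distrib, ← Finset.sum_mul, ← Finset.mul_sum]
  have e2 : ∑ j, 2 * (s t - (n : ℝ) * c t j) * (S' - (n : ℝ) * C' j) =
      (∑ j, (s t - (n : ℝ) * c t j)) * (2 * S') -
      (n : ℝ) * ∑ j, 2 * (s t - (n : ℝ) * c t j) * C' j := by
    calc ∑ j, 2 * (s t - (n : ℝ) * c t j) * (S' - (n : ℝ) * C' j)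
        = ∑ j, ((s t - (n : ℝ) * c t j) * (2 * S') -
            (n : ℝ) * (2 * (s t - (n : ℝ) * c t j) * C' j)) :=
          Finset.sum_congr rfl fun j _ => by ring
      _ = _ := by rw [Finset.sum_sub_distrib, ← Finset.sum_mul, ← Finset.mul_sum]
  have lhs1 : ∑ i, 2 * (s t - (m : ℝ) * r t i) * R' i =
      ∑ i, ∑ j, 4 * (s t - (m : ℝ) * r t i) * D i j * (A t i j) ^ 2 := by
    refine Finset.sum_congr rfl fun i _ => ?_
    rw [hR', Finset.mul_sum]
    exact Finset.sum_congr rfl fun j _ => by ring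
  have lhs2 : ∑ j, 2 * (s t - (n : ℝ) * c t j) * C' j =
      ∑ i, ∑ j, 4 * (s t - (n : ℝ) * c t j) * D i j * (A t i j) ^ 2 := by
    rw [Finset.sum_comm]
    refine Finset.sum_congr rfl fun j _ => ?_
    rw [hC', Finset.mul_sum]
    exact Finset.sum_congr rfl fun i _ => by ring
  rw [e1, e2, hz1, hz2, zero_mul, zero_sub, zero_sub, lhs1, lhs2]
  set T1 := ∑ i, ∑ j, 4 * (s t - (m : ℝ) * r t i) * D i j * (A t i j) ^ 2 with hT1
  set T2 := ∑ i, ∑ j, 4 * (s t - (n : ℝ) * c t j) * D i j * (A t i j) ^ 2 with hT2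
  set T := ∑ i, ∑ j, D i j ^ 2 * (A t i j) ^ 2 with hT
  have key : T1 + T2 = 4 * T := by
    rw [hT1, hT2, hT, Finset.mul_sum, ← Finset.sum_add_distrib]
    refine Finset.sum_congr rfl fun i _ => ?_
    rw [Finset.mul_sum, ← Finset.sum_add_distrib]
    refine Finset.sum_congr rfl fun j _ => ?_
    simp only [hDdef]
    ring
  have c1 : (1 / (m : ℝ)) * -((m : ℝ) * T1) = -T1 := by
    rw [mul_neg, ← mul_assoc, one_div_mul_cancel hm', one_mul]
  have c2 : (1 / (n : ℝ)) * -((n : ℝ) * T2) = -T2 := by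
    rw [mul_neg, ← mul_assoc, one_div_mul_cancel hn', one_mul]
  rw [c1, c2]
  linarith [key]
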